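/- For any inputs u_a, u_b ∈ U and any states x_a = (c_a, h_a) ∈ X and x_b = (c_b, h_b) ∈ X, the one-step LSTM updates (c_a⁺, h_a⁺) = f(x_a, u_a) and (c_b⁺, h_b⁺) = f(x_b, u_b) satisfy the componentwise vector inequality (‖c_a⁺ − c_b⁺‖, ‖h_a⁺ − h_b⁺‖)ᵀ ≤ A_δ · (‖c_a − c_b‖, ‖h_a − h_b‖)ᵀ + B_δ · ‖u_a − u_b‖. -/

import Mathlib

open Matrix Filter Set
open scoped ENNReal NNReal BigOperators

noncomputable section

namespace LSTMmpc

/-- The logistic sigmoid `σ(z) = 1/(1+e^{-z})`. -/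
def sigmoid (z : ℝ) : ℝ := 1 / (1 + Real.exp (-z))

/-- Euclidean norm of a finite real vector. -/
def enorm {k : ℕ} (v : Fin k → ℝ) : ℝ := Real.sqrt (∑ i, v i ^ 2)

/-- Sup (∞) norm of a finite real vector. -/
def vinf {k : ℕ} (v : Fin k → ℝ) : ℝ := ⨆ i, |v i|

/-- Spectral (ℓ²-induced) norm of a real matrix. -/
def spec {a b : ℕ} (M : Matrix (Fin a) (Fin b) ℝ) : ℝ :=
  ⨆ v : {v : Fin b → ℝ // enorm v ≤ 1}, enorm (M.mulVec v.1)

/-- Induced ∞-norm (maximum absolute row sum) of the horizontal block `[s•A, B, v]`. -/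
def rowNorm3 {n m : ℕ} (s : ℝ) (A : Matrix (Fin n) (Fin m) ℝ)
    (B : Matrix (Fin n) (Fin n) ℝ) (v : Fin n → ℝ) : ℝ :=
  ⨆ i, (∑ j, |s * A i j| + ∑ j, |B i j| + |v i|)

/-- Induced ∞-norm of the horizontal block `[s•A, B, v, C, t•D]`. -/
def rowNorm5 {n m p : ℕ} (s : ℝ) (A : Matrix (Fin n) (Fin m) ℝ)
    (B : Matrix (Fin n) (Fin n) ℝ) (v : Fin n → ℝ)
    (C : Matrix (Fin n) (Fin n) ℝ) (t : ℝ) (D : Matrix (Fin n) (Fin p) ℝ) : ℝ :=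
  ⨆ i, (∑ j, |s * A i j| + ∑ j, |B i j| + |v i| + ∑ j, |C i j| + ∑ j, |t * D i j|)

/-- Weighted norm `‖v‖_P = √(vᵀ P v)`. -/
def wnorm {k : ℕ} (P : Matrix (Fin k) (Fin k) ℝ) (v : Fin k → ℝ) : ℝ :=
  Real.sqrt (v ⬝ᵥ P.mulVec v)

/-- Minimum eigenvalue of a hermitian real matrix. -/
def lamMin {k : ℕ} (P : Matrix (Fin k) (Fin k) ℝ) (hP : P.IsHermitian) : ℝ :=
  ⨅ i, hP.eigenvalues i

/-- Maximum eigenvalue of a hermitian real matrix. -/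
def lamMax {k : ℕ} (P : Matrix (Fin k) (Fin k) ℝ) (hP : P.IsHermitian) : ℝ :=
  ⨆ i, hP.eigenvalues i

/-- Spectral radius (over `ℂ`) of a real square matrix. -/
def specRad {k : ℕ} (M : Matrix (Fin k) (Fin k) ℝ) : ℝ≥0∞ :=
  spectralRadius ℂ (M.map (fun x : ℝ => (x : ℂ)))

/-- Class `K∞` functions `[0,∞) → [0,∞)`. -/
def IsClassKInf (γ : ℝ → ℝ) : Prop :=
  ContinuousOn γ (Set.Ici 0) ∧ γ 0 = 0 ∧ StrictMonoOn γ (Set.Ici 0) ∧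
    (∀ s, 0 ≤ s → 0 ≤ γ s) ∧ Tendsto γ atTop atTop

/-- Class `KL` functions. -/
def IsClassKL (β : ℝ → ℕ → ℝ) : Prop :=
  (∀ k, ContinuousOn (fun s => β s k) (Set.Ici 0) ∧
      StrictMonoOn (fun s => β s k) (Set.Ici 0) ∧ β 0 k = 0) ∧
  (∀ s, 0 < s → StrictAnti (fun k => β s k) ∧ Tendsto (fun k => β s k) atTop (nhds 0)) ∧
  (∀ s, 0 ≤ s → ∀ k, 0 ≤ β s k)

/-- Weights of an LSTM network. -/
structure LSTM (n m p : ℕ) where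
  Wf : Matrix (Fin n) (Fin m) ℝ
  Wi : Matrix (Fin n) (Fin m) ℝ
  Wc : Matrix (Fin n) (Fin m) ℝ
  Wo : Matrix (Fin n) (Fin m) ℝ
  Uf : Matrix (Fin n) (Fin n) ℝ
  Ui : Matrix (Fin n) (Fin n) ℝ
  Uc : Matrix (Fin n) (Fin n) ℝ
  Uo : Matrix (Fin n) (Fin n) ℝ
  bf : Fin n → ℝ
  bi : Fin n → ℝ
  bc : Fin n → ℝ
  bo : Fin n → ℝ
  Wy : Matrix (Fin p) (Fin n) ℝ
  bY : Fin p → ℝ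

/-- LSTM state `(c, h)`. -/
abbrev State (n : ℕ) := (Fin n → ℝ) × (Fin n → ℝ)

/-- Augmented state `(c, h, d)`. -/
abbrev AugState (n p : ℕ) := (Fin n → ℝ) × (Fin n → ℝ) × (Fin p → ℝ)

variable {n m p : ℕ}

def stepC (S : LSTM n m p) (u : Fin m → ℝ) (c h : Fin n → ℝ) : Fin n → ℝ := fun j =>
  sigmoid ((S.Wf.mulVec u + S.Uf.mulVec h + S.bf) j) * c j +
    sigmoid ((S.Wi.mulVec u + S.Ui.mulVec h + S.bi) j) *
      Real.tanh ((S.Wc.mulVec u + S.Uc.mulVec h + S.bc) j)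

def stepH (S : LSTM n m p) (u : Fin m → ℝ) (c h : Fin n → ℝ) : Fin n → ℝ := fun j =>
  sigmoid ((S.Wo.mulVec u + S.Uo.mulVec h + S.bo) j) * Real.tanh (stepC S u c h j)

/-- One step of the LSTM dynamics `x⁺ = f(x, u)`. -/
def step (S : LSTM n m p) (x : State n) (u : Fin m → ℝ) : State n :=
  (stepC S u x.1 x.2, stepH S u x.1 x.2)

/-- Output map `g(x) = W_y h + b_y`. -/
def out (S : LSTM n m p) (x : State n) : Fin p → ℝ := S.Wy.mulVec x.2 + S.bY

/-- LSTM trajectory. -/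
def traj (S : LSTM n m p) (x0 : State n) (u : ℕ → Fin m → ℝ) : ℕ → State n
  | 0 => x0
  | k + 1 => step S (traj S x0 u k) (u k)

def sFb (S : LSTM n m p) (umax : ℝ) : ℝ := sigmoid (rowNorm3 umax S.Wf S.Uf S.bf)
def sIb (S : LSTM n m p) (umax : ℝ) : ℝ := sigmoid (rowNorm3 umax S.Wi S.Ui S.bi)
def sOb (S : LSTM n m p) (umax : ℝ) : ℝ := sigmoid (rowNorm3 umax S.Wo S.Uo S.bo)
def sCb (S : LSTM n m p) (umax : ℝ) : ℝ := Real.tanh (rowNorm3 umax S.Wc S.Uc S.bc)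
def sXb (S : LSTM n m p) (umax : ℝ) : ℝ :=
  Real.tanh (sIb S umax * sCb S umax / (1 - sFb S umax))
def alphaD (S : LSTM n m p) (umax : ℝ) : ℝ :=
  (1/4) * spec S.Uf * (sIb S umax * sCb S umax / (1 - sFb S umax)) +
    sIb S umax * spec S.Uc + (1/4) * spec S.Ui * sCb S umax
def betaD (S : LSTM n m p) (umax : ℝ) : ℝ :=
  (1/4) * spec S.Wf * (sIb S umax * sCb S umax / (1 - sFb S umax)) +
    sIb S umax * spec S.Wc + (1/4) * spec S.Wi * sCb S umax
def Adelta (S : LSTM n m p) (umax : ℝ) : Matrix (Fin 2) (Fin 2) ℝ :=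
  !![sFb S umax, alphaD S umax;
     sOb S umax * sFb S umax, alphaD S umax * sOb S umax + (1/4) * sXb S umax * spec S.Uo]
def Bdelta (S : LSTM n m p) (umax : ℝ) : Fin 2 → ℝ :=
  ![betaD S umax, betaD S umax * sOb S umax + (1/4) * sXb S umax * spec S.Wo]

def setU (m : ℕ) (umax : ℝ) : Set (Fin m → ℝ) := {u | vinf u ≤ umax}
def setH (n : ℕ) : Set (Fin n → ℝ) := {h | vinf h ≤ 1}
def setC (S : LSTM n m p) (umax : ℝ) : Set (Fin n → ℝ) :=
  {c | vinf c ≤ sIb S umax * sCb S umax / (1 - sFb S umax)}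
def setX (S : LSTM n m p) (umax : ℝ) : Set (State n) := (setC S umax) ×ˢ (setH n)
def setD (p : ℕ) (dmax : ℝ) : Set (Fin p → ℝ) := {d | vinf d ≤ dmax}

/-- Euclidean norm of the full state. -/
def xnorm {n : ℕ} (x : State n) : ℝ := Real.sqrt (∑ i, x.1 i ^ 2 + ∑ i, x.2 i ^ 2)

/-- Euclidean norm of the augmented state. -/
def chinorm {n p : ℕ} (χ : AugState n p) : ℝ :=
  Real.sqrt (∑ i, χ.1 i ^ 2 + ∑ i, χ.2.1 i ^ 2 + ∑ i, χ.2.2 i ^ 2)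

/-- Incremental input-to-state stability of the LSTM in `X` and `U`. -/
def deltaISS (S : LSTM n m p) (umax : ℝ) : Prop :=
  ∃ β γ, IsClassKL β ∧ IsClassKInf γ ∧
    ∀ (k : ℕ) (xa0 xb0 : State n), xa0 ∈ setX S umax → xb0 ∈ setX S umax →
      ∀ ua ub : ℕ → Fin m → ℝ,
        (∀ h < k, ua h ∈ setU m umax) → (∀ h < k, ub h ∈ setU m umax) →
        xnorm (traj S xa0 ua k - traj S xb0 ub k) ≤
          β (xnorm (xa0 - xb0)) k + γ (⨆ h ∈ Finset.range k, enorm (ua h - ub h))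

/-- Observer gains. -/
structure Gains (n p : ℕ) where
  Lf : Matrix (Fin n) (Fin p) ℝ
  Li : Matrix (Fin n) (Fin p) ℝ
  Lo : Matrix (Fin n) (Fin p) ℝ
  Ld : Matrix (Fin p) (Fin p) ℝ

/-- Componentwise saturation to `[-dmax, dmax]`. -/
def sat {p : ℕ} (dmax : ℝ) (v : Fin p → ℝ) : Fin p → ℝ := fun j =>
  min (max (v j) (-dmax)) dmax

/-- Observer output `ŷ = W_y ĥ + b_y + d̂`. -/
def yhat (S : LSTM n m p) (hh : Fin n → ℝ) (dh : Fin p → ℝ) : Fin p → ℝ :=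
  S.Wy.mulVec hh + S.bY + dh

def obsC (S : LSTM n m p) (G : Gains n p) (u : Fin m → ℝ) (y : Fin p → ℝ)
    (ch hh : Fin n → ℝ) (dh : Fin p → ℝ) : Fin n → ℝ := fun j =>
  sigmoid ((S.Wf.mulVec u + S.Uf.mulVec hh + S.bf + G.Lf.mulVec (y - yhat S hh dh)) j) * ch j +
    sigmoid ((S.Wi.mulVec u + S.Ui.mulVec hh + S.bi + G.Li.mulVec (y - yhat S hh dh)) j) *
      Real.tanh ((S.Wc.mulVec u + S.Uc.mulVec hh + S.bc) j)

def obsH (S : LSTM n m p) (G : Gains n p) (u : Fin m → ℝ) (y : Fin p → ℝ)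
    (ch hh : Fin n → ℝ) (dh : Fin p → ℝ) : Fin n → ℝ := fun j =>
  sigmoid ((S.Wo.mulVec u + S.Uo.mulVec hh + S.bo + G.Lo.mulVec (y - yhat S hh dh)) j) *
    Real.tanh (obsC S G u y ch hh dh j)

def obsD (S : LSTM n m p) (G : Gains n p) (dmax : ℝ) (y : Fin p → ℝ)
    (hh : Fin n → ℝ) (dh : Fin p → ℝ) : Fin p → ℝ :=
  sat dmax (dh + G.Ld.mulVec (y - yhat S hh dh))

/-- One step of the observer. -/
def obsStep (S : LSTM n m p) (G : Gains n p) (dmax : ℝ) (u : Fin m → ℝ) (y : Fin p → ℝ)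
    (χ : AugState n p) : AugState n p :=
  (obsC S G u y χ.1 χ.2.1 χ.2.2, obsH S G u y χ.1 χ.2.1 χ.2.2, obsD S G dmax y χ.2.1 χ.2.2)

/-- Observer trajectory. -/
def obsTraj (S : LSTM n m p) (G : Gains n p) (dmax : ℝ) (u : ℕ → Fin m → ℝ)
    (y : ℕ → Fin p → ℝ) (χ0 : AugState n p) : ℕ → AugState n p
  | 0 => χ0
  | k + 1 => obsStep S G dmax (u k) (y k) (obsTraj S G dmax u y χ0 k)

def sFh (S : LSTM n m p) (G : Gains n p) (umax dmax : ℝ) : ℝ :=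
  sigmoid (rowNorm5 umax S.Wf (S.Uf - G.Lf * S.Wy) S.bf (G.Lf * S.Wy) (2 * dmax) G.Lf)
def sIh (S : LSTM n m p) (G : Gains n p) (umax dmax : ℝ) : ℝ :=
  sigmoid (rowNorm5 umax S.Wi (S.Ui - G.Li * S.Wy) S.bi (G.Li * S.Wy) (2 * dmax) G.Li)
def sOh (S : LSTM n m p) (G : Gains n p) (umax dmax : ℝ) : ℝ :=
  sigmoid (rowNorm5 umax S.Wo (S.Uo - G.Lo * S.Wy) S.bo (G.Lo * S.Wy) (2 * dmax) G.Lo)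
def alphaH (S : LSTM n m p) (G : Gains n p) (umax : ℝ) : ℝ :=
  (1/4) * (sIb S umax * sCb S umax / (1 - sFb S umax)) * spec (S.Uf - G.Lf * S.Wy) +
    sIb S umax * spec S.Uc + (1/4) * sCb S umax * spec (S.Ui - G.Li * S.Wy)
def betaH (S : LSTM n m p) (G : Gains n p) (umax : ℝ) : ℝ :=
  (1/4) * (sIb S umax * sCb S umax / (1 - sFb S umax)) * spec G.Lf +
    (1/4) * sCb S umax * spec G.Li
def gammaH (S : LSTM n m p) (G : Gains n p) (umax dmax : ℝ) : ℝ :=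
  sOh S G umax dmax * alphaH S G umax + (1/4) * sXb S umax * spec (S.Uo - G.Lo * S.Wy)
def Ad (S : LSTM n m p) (G : Gains n p) (umax dmax : ℝ) : Matrix (Fin 3) (Fin 3) ℝ :=
  !![sFh S G umax dmax, alphaH S G umax, betaH S G umax;
     sOh S G umax dmax * sFh S G umax dmax, gammaH S G umax dmax,
       sOh S G umax dmax * betaH S G umax + (1/4) * sXb S umax * spec G.Lo;
     0, spec (G.Ld * S.Wy), spec ((1 : Matrix (Fin p) (Fin p) ℝ) - G.Ld)]

def setChat (S : LSTM n m p) (G : Gains n p) (umax dmax : ℝ) : Set (Fin n → ℝ) :=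
  {c | vinf c ≤ sIh S G umax dmax * sCb S umax / (1 - sFh S G umax dmax)}
def setIhat (S : LSTM n m p) (G : Gains n p) (umax dmax : ℝ) : Set (AugState n p) :=
  (setChat S G umax dmax) ×ˢ ((setH n) ×ˢ (setD p dmax))

/-- Incremental Lyapunov function for the LSTM. -/
def Vs {n : ℕ} (Ps : Matrix (Fin 2) (Fin 2) ℝ) (xa xb : State n) : ℝ :=
  wnorm Ps ![enorm (xa.1 - xb.1), enorm (xa.2 - xb.2)]

/-- Lyapunov function for the observer estimation error. -/
def Vo {n p : ℕ} (Po : Matrix (Fin 3) (Fin 3) ℝ) (χh χ : AugState n p) : ℝ :=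
  wnorm Po ![enorm (χh.1 - χ.1), enorm (χh.2.1 - χ.2.1), enorm (χh.2.2 - χ.2.2)]

/-- Disturbance-augmented LSTM update applied to the observer state. -/
def faug (S : LSTM n m p) (χ : AugState n p) (u : Fin m → ℝ) : AugState n p :=
  (stepC S u χ.1 χ.2.1, stepH S u χ.1 χ.2.1, χ.2.2)

def alphaBar (S : LSTM n m p) (G : Gains n p) (umax dmax : ℝ) : ℝ :=
  (1/4) * (sIh S G umax dmax * sCb S umax / (1 - sFh S G umax dmax)) * spec (G.Lf * S.Wy) +
    (1/4) * sCb S umax * spec (G.Li * S.Wy)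
def betaBar (S : LSTM n m p) (G : Gains n p) (umax dmax : ℝ) : ℝ :=
  (1/4) * (sIh S G umax dmax * sCb S umax / (1 - sFh S G umax dmax)) * spec G.Lf +
    (1/4) * sCb S umax * spec G.Li
def gammaBar (S : LSTM n m p) (G : Gains n p) (umax dmax : ℝ) : ℝ :=
  (1/4) * Real.tanh (sIh S G umax dmax * sCb S umax / (1 - sFh S G umax dmax))
def Lmat (S : LSTM n m p) (G : Gains n p) (umax dmax : ℝ) : Matrix (Fin 3) (Fin 3) ℝ :=
  !![0, alphaBar S G umax dmax, betaBar S G umax dmax;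
     0, gammaBar S G umax dmax * spec (G.Lo * S.Wy) + sOb S umax * alphaBar S G umax dmax,
       gammaBar S G umax dmax * spec G.Lo + sOb S umax * betaBar S G umax dmax;
     0, spec (G.Ld * S.Wy), spec G.Ld]


/-! ### Auxiliary lemmas for statement0 -/

section Aux

lemma sigmoid_hasDerivAt (z : ℝ) :
    HasDerivAt sigmoid (Real.exp (-z) / (1 + Real.exp (-z)) ^ 2) z := by
  have h1 : HasDerivAt (fun w : ℝ => 1 + Real.exp (-w)) (-Real.exp (-z)) z := by
    have h0 : HasDerivAt (fun w : ℝ => Real.exp (-w)) (-Real.exp (-z)) z := by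
      convert (hasDerivAt_neg z).exp using 1; ring
    simpa using h0.const_add 1
  have hne : (1 + Real.exp (-z)) ≠ 0 := by positivity
  have h2 := h1.inv hne
  have heq : -(-Real.exp (-z)) / (1 + Real.exp (-z)) ^ 2
      = Real.exp (-z) / (1 + Real.exp (-z)) ^ 2 := by ring
  rw [heq] at h2
  have e : sigmoid = fun y => (1 + Real.exp (-y))⁻¹ := by
    funext y; simp [sigmoid, one_div]
  rw [e]; exact h2

lemma sigmoid_pos (z : ℝ) : 0 < sigmoid z := by
  unfold sigmoid; positivity

lemma sigmoid_lt_one (z : ℝ) : sigmoid z < 1 := by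
  unfold sigmoid
  rw [div_lt_one (by positivity)]
  have := Real.exp_pos (-z); linarith

lemma sigmoid_mono : Monotone sigmoid := by
  intro a b hab
  unfold sigmoid
  apply one_div_le_one_div_of_le (by positivity)
  have : Real.exp (-b) ≤ Real.exp (-a) := Real.exp_le_exp.2 (by linarith)
  linarith

lemma sigmoid_lip (a b : ℝ) : |sigmoid a - sigmoid b| ≤ (1/4) * |a - b| := by
  have := convex_univ.norm_image_sub_le_of_norm_hasDerivWithin_le
    (f := sigmoid) (f' := fun z => Real.exp (-z) / (1 + Real.exp (-z)) ^ 2)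
    (fun x _ => (sigmoid_hasDerivAt x).hasDerivWithinAt) (C := 1/4)
    (fun x _ => by
      rw [Real.norm_eq_abs, abs_of_nonneg (by positivity)]
      rw [div_le_iff₀ (by positivity)]
      nlinarith [sq_nonneg (1 - Real.exp (-x)), Real.exp_pos (-x)])
    (mem_univ b) (mem_univ a)
  simpa [Real.norm_eq_abs] using this

lemma tanh_hasDerivAt (z : ℝ) : HasDerivAt Real.tanh (1 / Real.cosh z ^ 2) z := by
  have h : HasDerivAt (fun w => Real.sinh w / Real.cosh w)
      ((Real.cosh z * Real.cosh z - Real.sinh z * Real.sinh z) / Real.cosh z ^ 2) z :=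
    (Real.hasDerivAt_sinh z).div (Real.hasDerivAt_cosh z) (Real.cosh_pos z).ne'
  have e1 : (fun w => Real.sinh w / Real.cosh w) = Real.tanh := by
    funext w; rw [Real.tanh_eq_sinh_div_cosh]
  have e2 : Real.cosh z * Real.cosh z - Real.sinh z * Real.sinh z = 1 := by
    have := Real.cosh_sq_sub_sinh_sq z; nlinarith
  rw [e1, e2] at h; exact h

lemma tanh_lip (a b : ℝ) : |Real.tanh a - Real.tanh b| ≤ |a - b| := by
  have := convex_univ.norm_image_sub_le_of_norm_hasDerivWithin_le
    (f := Real.tanh) (f' := fun z => 1 / Real.cosh z ^ 2)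
    (fun x _ => (tanh_hasDerivAt x).hasDerivWithinAt) (C := 1)
    (fun x _ => by
      rw [Real.norm_eq_abs, abs_of_nonneg (by positivity)]
      rw [div_le_one (by positivity)]
      nlinarith [Real.one_le_cosh x])
    (mem_univ b) (mem_univ a)
  simpa [Real.norm_eq_abs] using this

lemma tanh_mono : Monotone Real.tanh := by
  have h : ∀ x : ℝ, 0 ≤ deriv Real.tanh x := by
    intro x
    rw [(tanh_hasDerivAt x).deriv]
    positivity
  exact monotone_of_deriv_nonneg (fun x => (tanh_hasDerivAt x).differentiableAt) h

lemma tanh_zero' : Real.tanh 0 = 0 := by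
  rw [Real.tanh_eq_sinh_div_cosh]; simp

lemma abs_tanh_le {a c : ℝ} (h : |a| ≤ c) : |Real.tanh a| ≤ Real.tanh c := by
  rcases abs_cases (Real.tanh a) with ⟨he, _⟩ | ⟨he, _⟩
  · rw [he]; exact tanh_mono ((le_abs_self a).trans h)
  · rw [he, ← Real.tanh_neg]
    exact tanh_mono (by have := neg_abs_le a; linarith [abs_nonneg a])

lemma tanh_nonneg' {c : ℝ} (h : 0 ≤ c) : 0 ≤ Real.tanh c := by
  have := tanh_mono h; rwa [tanh_zero'] at this

/-! #### enorm lemmas -/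

lemma enorm_nonneg {k : ℕ} (v : Fin k → ℝ) : 0 ≤ enorm v := Real.sqrt_nonneg _

lemma enorm_mono {k : ℕ} {a b : Fin k → ℝ} (h : ∀ j, |a j| ≤ b j) :
    enorm a ≤ enorm b := by
  apply Real.sqrt_le_sqrt
  apply Finset.sum_le_sum
  intro j _
  calc a j ^ 2 = |a j| ^ 2 := (sq_abs _).symm
    _ ≤ b j ^ 2 := pow_le_pow_left₀ (abs_nonneg _) (h j) 2

lemma enorm_abs_smul {k : ℕ} (K : ℝ) (hK : 0 ≤ K) (w : Fin k → ℝ) :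
    enorm (fun j => K * |w j|) = K * enorm w := by
  unfold enorm
  have e : ∑ j, (K * |w j|) ^ 2 = K ^ 2 * ∑ j, w j ^ 2 := by
    rw [Finset.mul_sum]
    apply Finset.sum_congr rfl
    intro j _
    rw [mul_pow, sq_abs]
  rw [e, Real.sqrt_mul (sq_nonneg K), Real.sqrt_sq hK]

lemma enorm_le_mul {k : ℕ} {v w : Fin k → ℝ} {K : ℝ} (hK : 0 ≤ K)
    (h : ∀ j, |v j| ≤ K * |w j|) : enorm v ≤ K * enorm w := by
  calc enorm v ≤ enorm (fun j => K * |w j|) := enorm_mono h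
    _ = K * enorm w := enorm_abs_smul K hK w

lemma enorm_eq_norm {k : ℕ} (v : Fin k → ℝ) :
    enorm v = ‖(EuclideanSpace.equiv (Fin k) ℝ).symm v‖ := by
  rw [EuclideanSpace.norm_eq]
  unfold enorm
  congr 1
  apply Finset.sum_congr rfl
  intro j _
  show v j ^ 2 = ‖v j‖ ^ 2
  rw [Real.norm_eq_abs, sq_abs]

lemma enorm_add_le {k : ℕ} (a b : Fin k → ℝ) : enorm (a + b) ≤ enorm a + enorm b := by
  rw [enorm_eq_norm, enorm_eq_norm, enorm_eq_norm, map_add]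
  exact norm_add_le _ _

lemma enorm_smul {k : ℕ} (c : ℝ) (v : Fin k → ℝ) : enorm (c • v) = |c| * enorm v := by
  rw [enorm_eq_norm, enorm_eq_norm, _root_.map_smul]
  rw [norm_smul, Real.norm_eq_abs]

lemma enorm_eq_zero_iff {k : ℕ} (v : Fin k → ℝ) : enorm v = 0 ↔ v = 0 := by
  rw [enorm_eq_norm, norm_eq_zero, EmbeddingLike.map_eq_zero_iff]

lemma abs_le_enorm {k : ℕ} (v : Fin k → ℝ) (j : Fin k) : |v j| ≤ enorm v := by
  rw [← Real.sqrt_sq_eq_abs]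
  apply Real.sqrt_le_sqrt
  exact Finset.single_le_sum (fun i _ => sq_nonneg (v i)) (Finset.mem_univ j)

lemma abs_le_vinf {k : ℕ} (v : Fin k → ℝ) (j : Fin k) : |v j| ≤ vinf v :=
  le_ciSup (f := fun i => |v i|) (Set.Finite.bddAbove (Set.finite_range _)) j

lemma spec_nonneg {a b : ℕ} (M : Matrix (Fin a) (Fin b) ℝ) : 0 ≤ spec M :=
  Real.iSup_nonneg fun _ => enorm_nonneg _

lemma enorm_mulVec_le {a b : ℕ} (M : Matrix (Fin a) (Fin b) ℝ) (v : Fin b → ℝ) :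
    enorm (M.mulVec v) ≤ spec M * enorm v := by
  have hbdd : BddAbove (Set.range fun w : {w : Fin b → ℝ // enorm w ≤ 1} =>
      enorm (M.mulVec w.1)) := by
    refine ⟨enorm (fun i => ∑ j, |M i j|), ?_⟩
    rintro x ⟨w, rfl⟩
    apply enorm_mono
    intro i
    rw [Matrix.mulVec, dotProduct]
    calc |∑ j, M i j * w.1 j| ≤ ∑ j, |M i j * w.1 j| := Finset.abs_sum_le_sum_abs _ _
      _ ≤ ∑ j, |M i j| := by
          apply Finset.sum_le_sum
          intro j _
          rw [abs_mul]
          have h1 : |w.1 j| ≤ 1 := (abs_le_enorm w.1 j).trans w.2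
          nlinarith [abs_nonneg (M i j), abs_nonneg (w.1 j)]
  rcases eq_or_ne (enorm v) 0 with h0 | h0
  · have hv : v = 0 := (enorm_eq_zero_iff v).1 h0
    subst hv
    rw [Matrix.mulVec_zero, h0]
    have h00 : enorm (0 : Fin a → ℝ) = 0 := (enorm_eq_zero_iff 0).2 rfl
    rw [h00, mul_zero]
  · have hpos : 0 < enorm v := lt_of_le_of_ne (enorm_nonneg v) (Ne.symm h0)
    set t := enorm v with ht
    have hw : enorm (t⁻¹ • v) = 1 := by
      rw [enorm_smul, abs_of_pos (inv_pos.2 hpos), inv_mul_cancel₀ h0]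
    have hle : enorm (M.mulVec (t⁻¹ • v)) ≤ spec M :=
      le_ciSup hbdd (⟨t⁻¹ • v, le_of_eq hw⟩ : {w : Fin b → ℝ // enorm w ≤ 1})
    rw [Matrix.mulVec_smul, enorm_smul, abs_of_pos (inv_pos.2 hpos)] at hle
    calc enorm (M.mulVec v) = t * (t⁻¹ * enorm (M.mulVec v)) := by field_simp
      _ ≤ t * spec M := mul_le_mul_of_nonneg_left hle hpos.le
      _ = spec M * t := mul_comm _ _

/-! #### Gate bounds -/

lemma rowNorm3_nonneg {n' m' : ℕ} (umax : ℝ) (W : Matrix (Fin n') (Fin m') ℝ)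
    (U : Matrix (Fin n') (Fin n') ℝ) (bv : Fin n' → ℝ) : 0 ≤ rowNorm3 umax W U bv :=
  Real.iSup_nonneg fun i => by positivity

lemma gate_abs_le {n' m' : ℕ} (umax : ℝ) (W : Matrix (Fin n') (Fin m') ℝ)
    (U : Matrix (Fin n') (Fin n') ℝ) (bv : Fin n' → ℝ) {u : Fin m' → ℝ} {h : Fin n' → ℝ}
    (hum : 0 ≤ umax) (hu : vinf u ≤ umax) (hh : vinf h ≤ 1) (j : Fin n') :
    |(W.mulVec u + U.mulVec h + bv) j| ≤ rowNorm3 umax W U bv := by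
  have h1 : |W.mulVec u j| ≤ ∑ k, |umax * W j k| := by
    rw [Matrix.mulVec, dotProduct]
    calc |∑ k, W j k * u k| ≤ ∑ k, |W j k * u k| := Finset.abs_sum_le_sum_abs _ _
      _ ≤ ∑ k, |umax * W j k| := by
          apply Finset.sum_le_sum
          intro k _
          have hk : |u k| ≤ umax := (abs_le_vinf u k).trans hu
          rw [abs_mul, abs_mul, abs_of_nonneg hum, mul_comm (|W j k|) (|u k|)]
          exact mul_le_mul_of_nonneg_right hk (abs_nonneg _)
  have h2 : |U.mulVec h j| ≤ ∑ k, |U j k| := by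
    rw [Matrix.mulVec, dotProduct]
    calc |∑ k, U j k * h k| ≤ ∑ k, |U j k * h k| := Finset.abs_sum_le_sum_abs _ _
      _ ≤ ∑ k, |U j k| := by
          apply Finset.sum_le_sum
          intro k _
          have hk : |h k| ≤ 1 := (abs_le_vinf h k).trans hh
          rw [abs_mul]
          nlinarith [abs_nonneg (U j k), abs_nonneg (h k)]
  have h3 : |(W.mulVec u + U.mulVec h + bv) j| ≤
      ∑ k, |umax * W j k| + ∑ k, |U j k| + |bv j| := by
    simp only [Pi.add_apply]
    calc |W.mulVec u j + U.mulVec h j + bv j|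
        ≤ |W.mulVec u j + U.mulVec h j| + |bv j| := abs_add_le _ _
      _ ≤ |W.mulVec u j| + |U.mulVec h j| + |bv j| := by
          have := abs_add_le (W.mulVec u j) (U.mulVec h j); linarith
      _ ≤ ∑ k, |umax * W j k| + ∑ k, |U j k| + |bv j| := by linarith
  refine h3.trans ?_
  exact le_ciSup (f := fun i => ∑ k, |umax * W i k| + ∑ k, |U i k| + |bv i|)
    (Set.Finite.bddAbove (Set.finite_range _)) j

lemma gate_sig_le {n' m' : ℕ} (umax : ℝ) (W : Matrix (Fin n') (Fin m') ℝ)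
    (U : Matrix (Fin n') (Fin n') ℝ) (bv : Fin n' → ℝ) {u : Fin m' → ℝ} {h : Fin n' → ℝ}
    (hum : 0 ≤ umax) (hu : vinf u ≤ umax) (hh : vinf h ≤ 1) (j : Fin n') :
    sigmoid ((W.mulVec u + U.mulVec h + bv) j) ≤ sigmoid (rowNorm3 umax W U bv) :=
  sigmoid_mono ((le_abs_self _).trans (gate_abs_le umax W U bv hum hu hh j))

lemma gate_tanh_le {n' m' : ℕ} (umax : ℝ) (W : Matrix (Fin n') (Fin m') ℝ)
    (U : Matrix (Fin n') (Fin n') ℝ) (bv : Fin n' → ℝ) {u : Fin m' → ℝ} {h : Fin n' → ℝ}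
    (hum : 0 ≤ umax) (hu : vinf u ≤ umax) (hh : vinf h ≤ 1) (j : Fin n') :
    |Real.tanh ((W.mulVec u + U.mulVec h + bv) j)| ≤ Real.tanh (rowNorm3 umax W U bv) :=
  abs_tanh_le (gate_abs_le umax W U bv hum hu hh j)

end Aux


section Main

variable {n m p : ℕ}

lemma one_sub_sFb_pos (S : LSTM n m p) (umax : ℝ) : 0 < 1 - sFb S umax := by
  have := sigmoid_lt_one (rowNorm3 umax S.Wf S.Uf S.bf)
  unfold sFb; linarith

lemma sFb_nonneg (S : LSTM n m p) (umax : ℝ) : 0 ≤ sFb S umax := by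
  unfold sFb; exact (sigmoid_pos _).le

lemma sIb_nonneg (S : LSTM n m p) (umax : ℝ) : 0 ≤ sIb S umax := by
  unfold sIb; exact (sigmoid_pos _).le

lemma sOb_nonneg (S : LSTM n m p) (umax : ℝ) : 0 ≤ sOb S umax := by
  unfold sOb; exact (sigmoid_pos _).le

lemma sCb_nonneg (S : LSTM n m p) (umax : ℝ) : 0 ≤ sCb S umax := by
  unfold sCb; exact tanh_nonneg' (rowNorm3_nonneg _ _ _ _)

lemma cbar_nonneg (S : LSTM n m p) (umax : ℝ) :
    0 ≤ sIb S umax * sCb S umax / (1 - sFb S umax) :=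
  div_nonneg (mul_nonneg (sIb_nonneg S umax) (sCb_nonneg S umax)) (one_sub_sFb_pos S umax).le

lemma sXb_nonneg (S : LSTM n m p) (umax : ℝ) : 0 ≤ sXb S umax := by
  unfold sXb; exact tanh_nonneg' (cbar_nonneg S umax)

lemma cbar_key (S : LSTM n m p) (umax : ℝ) :
    sFb S umax * (sIb S umax * sCb S umax / (1 - sFb S umax)) + sIb S umax * sCb S umax =
      sIb S umax * sCb S umax / (1 - sFb S umax) := by
  have hne : (1 - sFb S umax) ≠ 0 := (one_sub_sFb_pos S umax).ne'
  field_simp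
  ring

/-- Invariance of the set `C`. -/
lemma stepC_abs_le (S : LSTM n m p) {umax : ℝ} (hum : 0 ≤ umax)
    {u : Fin m → ℝ} {c h : Fin n → ℝ} (hu : vinf u ≤ umax)
    (hc : vinf c ≤ sIb S umax * sCb S umax / (1 - sFb S umax)) (hh : vinf h ≤ 1) (j : Fin n) :
    |stepC S u c h j| ≤ sIb S umax * sCb S umax / (1 - sFb S umax) := by
  have hA0 : 0 ≤ sigmoid ((S.Wf.mulVec u + S.Uf.mulVec h + S.bf) j) := (sigmoid_pos _).le
  have hA : sigmoid ((S.Wf.mulVec u + S.Uf.mulVec h + S.bf) j) ≤ sFb S umax :=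
    gate_sig_le umax S.Wf S.Uf S.bf hum hu hh j
  have hB0 : 0 ≤ sigmoid ((S.Wi.mulVec u + S.Ui.mulVec h + S.bi) j) := (sigmoid_pos _).le
  have hB : sigmoid ((S.Wi.mulVec u + S.Ui.mulVec h + S.bi) j) ≤ sIb S umax :=
    gate_sig_le umax S.Wi S.Ui S.bi hum hu hh j
  have hT : |Real.tanh ((S.Wc.mulVec u + S.Uc.mulVec h + S.bc) j)| ≤ sCb S umax :=
    gate_tanh_le umax S.Wc S.Uc S.bc hum hu hh j
  have hcj : |c j| ≤ sIb S umax * sCb S umax / (1 - sFb S umax) := (abs_le_vinf c j).trans hc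
  have e1 : sigmoid ((S.Wf.mulVec u + S.Uf.mulVec h + S.bf) j) * |c j| ≤
      sFb S umax * (sIb S umax * sCb S umax / (1 - sFb S umax)) :=
    mul_le_mul hA hcj (abs_nonneg _) (sFb_nonneg S umax)
  have e2 : sigmoid ((S.Wi.mulVec u + S.Ui.mulVec h + S.bi) j) *
      |Real.tanh ((S.Wc.mulVec u + S.Uc.mulVec h + S.bc) j)| ≤ sIb S umax * sCb S umax :=
    mul_le_mul hB hT (abs_nonneg _) (sIb_nonneg S umax)
  calc |stepC S u c h j|
      ≤ |sigmoid ((S.Wf.mulVec u + S.Uf.mulVec h + S.bf) j) * c j| +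
        |sigmoid ((S.Wi.mulVec u + S.Ui.mulVec h + S.bi) j) *
          Real.tanh ((S.Wc.mulVec u + S.Uc.mulVec h + S.bc) j)| := abs_add_le _ _
    _ = sigmoid ((S.Wf.mulVec u + S.Uf.mulVec h + S.bf) j) * |c j| +
        sigmoid ((S.Wi.mulVec u + S.Ui.mulVec h + S.bi) j) *
          |Real.tanh ((S.Wc.mulVec u + S.Uc.mulVec h + S.bc) j)| := by
        rw [abs_mul, abs_mul, abs_of_nonneg hA0, abs_of_nonneg hB0]
    _ ≤ sFb S umax * (sIb S umax * sCb S umax / (1 - sFb S umax)) + sIb S umax * sCb S umax :=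
        add_le_add e1 e2
    _ = sIb S umax * sCb S umax / (1 - sFb S umax) := cbar_key S umax

lemma stepC_diff_bound (S : LSTM n m p) {umax : ℝ} (hum : 0 ≤ umax)
    {ua ub : Fin m → ℝ} {ca cb ha hb : Fin n → ℝ}
    (hua : vinf ua ≤ umax) (hub : vinf ub ≤ umax)
    (hcb : vinf cb ≤ sIb S umax * sCb S umax / (1 - sFb S umax))
    (hha : vinf ha ≤ 1) (hhb : vinf hb ≤ 1) :
    enorm (stepC S ua ca ha - stepC S ub cb hb) ≤
      sFb S umax * enorm (ca - cb) + alphaD S umax * enorm (ha - hb) +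
        betaD S umax * enorm (ua - ub) := by
  have hcbar0 : 0 ≤ sIb S umax * sCb S umax / (1 - sFb S umax) := cbar_nonneg S umax
  have hdf : ∀ j, (S.Wf.mulVec ua + S.Uf.mulVec ha + S.bf) j -
      (S.Wf.mulVec ub + S.Uf.mulVec hb + S.bf) j =
      (S.Uf.mulVec (ha - hb) + S.Wf.mulVec (ua - ub)) j := by
    intro j; simp [Matrix.mulVec_sub]; ring
  have hdi : ∀ j, (S.Wi.mulVec ua + S.Ui.mulVec ha + S.bi) j -
      (S.Wi.mulVec ub + S.Ui.mulVec hb + S.bi) j =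
      (S.Ui.mulVec (ha - hb) + S.Wi.mulVec (ua - ub)) j := by
    intro j; simp [Matrix.mulVec_sub]; ring
  have hdc : ∀ j, (S.Wc.mulVec ua + S.Uc.mulVec ha + S.bc) j -
      (S.Wc.mulVec ub + S.Uc.mulVec hb + S.bc) j =
      (S.Uc.mulVec (ha - hb) + S.Wc.mulVec (ua - ub)) j := by
    intro j; simp [Matrix.mulVec_sub]; ring
  have hsplit : stepC S ua ca ha - stepC S ub cb hb =
      (fun j => sigmoid ((S.Wf.mulVec ua + S.Uf.mulVec ha + S.bf) j) * (ca j - cb j)) +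
      ((fun j => (sigmoid ((S.Wf.mulVec ua + S.Uf.mulVec ha + S.bf) j) -
          sigmoid ((S.Wf.mulVec ub + S.Uf.mulVec hb + S.bf) j)) * cb j) +
      ((fun j => sigmoid ((S.Wi.mulVec ua + S.Ui.mulVec ha + S.bi) j) *
          (Real.tanh ((S.Wc.mulVec ua + S.Uc.mulVec ha + S.bc) j) -
           Real.tanh ((S.Wc.mulVec ub + S.Uc.mulVec hb + S.bc) j))) +
       (fun j => (sigmoid ((S.Wi.mulVec ua + S.Ui.mulVec ha + S.bi) j) -
          sigmoid ((S.Wi.mulVec ub + S.Ui.mulVec hb + S.bi) j)) *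
          Real.tanh ((S.Wc.mulVec ub + S.Uc.mulVec hb + S.bc) j)))) := by
    funext j
    simp only [Pi.sub_apply, Pi.add_apply, stepC]
    ring
  have hb1 : enorm (fun j => sigmoid ((S.Wf.mulVec ua + S.Uf.mulVec ha + S.bf) j) *
      (ca j - cb j)) ≤ sFb S umax * enorm (ca - cb) := by
    apply enorm_le_mul (sFb_nonneg S umax)
    intro j
    rw [abs_mul, Pi.sub_apply]
    have h1 : |sigmoid ((S.Wf.mulVec ua + S.Uf.mulVec ha + S.bf) j)| ≤ sFb S umax := by
      rw [abs_of_pos (sigmoid_pos _)]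
      exact gate_sig_le umax S.Wf S.Uf S.bf hum hua hha j
    exact mul_le_mul_of_nonneg_right h1 (abs_nonneg _)
  have hb2 : enorm (fun j => (sigmoid ((S.Wf.mulVec ua + S.Uf.mulVec ha + S.bf) j) -
      sigmoid ((S.Wf.mulVec ub + S.Uf.mulVec hb + S.bf) j)) * cb j) ≤
      (1/4 * (sIb S umax * sCb S umax / (1 - sFb S umax))) *
        enorm (S.Uf.mulVec (ha - hb) + S.Wf.mulVec (ua - ub)) := by
    apply enorm_le_mul (by positivity)
    intro j
    rw [abs_mul]
    have hl : |sigmoid ((S.Wf.mulVec ua + S.Uf.mulVec ha + S.bf) j) -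
        sigmoid ((S.Wf.mulVec ub + S.Uf.mulVec hb + S.bf) j)| ≤
        1/4 * |(S.Uf.mulVec (ha - hb) + S.Wf.mulVec (ua - ub)) j| := by
      have := sigmoid_lip ((S.Wf.mulVec ua + S.Uf.mulVec ha + S.bf) j)
        ((S.Wf.mulVec ub + S.Uf.mulVec hb + S.bf) j)
      rwa [hdf j] at this
    have hcbj : |cb j| ≤ sIb S umax * sCb S umax / (1 - sFb S umax) :=
      (abs_le_vinf cb j).trans hcb
    calc |sigmoid ((S.Wf.mulVec ua + S.Uf.mulVec ha + S.bf) j) -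
          sigmoid ((S.Wf.mulVec ub + S.Uf.mulVec hb + S.bf) j)| * |cb j|
        ≤ (1/4 * |(S.Uf.mulVec (ha - hb) + S.Wf.mulVec (ua - ub)) j|) *
          (sIb S umax * sCb S umax / (1 - sFb S umax)) :=
          mul_le_mul hl hcbj (abs_nonneg _) (by positivity)
      _ = (1/4 * (sIb S umax * sCb S umax / (1 - sFb S umax))) *
          |(S.Uf.mulVec (ha - hb) + S.Wf.mulVec (ua - ub)) j| := by ring
  have hb3 : enorm (fun j => sigmoid ((S.Wi.mulVec ua + S.Ui.mulVec ha + S.bi) j) *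
      (Real.tanh ((S.Wc.mulVec ua + S.Uc.mulVec ha + S.bc) j) -
       Real.tanh ((S.Wc.mulVec ub + S.Uc.mulVec hb + S.bc) j))) ≤
      sIb S umax * enorm (S.Uc.mulVec (ha - hb) + S.Wc.mulVec (ua - ub)) := by
    apply enorm_le_mul (sIb_nonneg S umax)
    intro j
    rw [abs_mul]
    have h1 : |sigmoid ((S.Wi.mulVec ua + S.Ui.mulVec ha + S.bi) j)| ≤ sIb S umax := by
      rw [abs_of_pos (sigmoid_pos _)]
      exact gate_sig_le umax S.Wi S.Ui S.bi hum hua hha j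
    have h2 : |Real.tanh ((S.Wc.mulVec ua + S.Uc.mulVec ha + S.bc) j) -
        Real.tanh ((S.Wc.mulVec ub + S.Uc.mulVec hb + S.bc) j)| ≤
        |(S.Uc.mulVec (ha - hb) + S.Wc.mulVec (ua - ub)) j| := by
      have := tanh_lip ((S.Wc.mulVec ua + S.Uc.mulVec ha + S.bc) j)
        ((S.Wc.mulVec ub + S.Uc.mulVec hb + S.bc) j)
      rwa [hdc j] at this
    exact mul_le_mul h1 h2 (abs_nonneg _) (sIb_nonneg S umax)
  have hb4 : enorm (fun j => (sigmoid ((S.Wi.mulVec ua + S.Ui.mulVec ha + S.bi) j) -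
      sigmoid ((S.Wi.mulVec ub + S.Ui.mulVec hb + S.bi) j)) *
      Real.tanh ((S.Wc.mulVec ub + S.Uc.mulVec hb + S.bc) j)) ≤
      (1/4 * sCb S umax) * enorm (S.Ui.mulVec (ha - hb) + S.Wi.mulVec (ua - ub)) := by
    apply enorm_le_mul (by have := sCb_nonneg S umax; positivity)
    intro j
    rw [abs_mul]
    have hl : |sigmoid ((S.Wi.mulVec ua + S.Ui.mulVec ha + S.bi) j) -
        sigmoid ((S.Wi.mulVec ub + S.Ui.mulVec hb + S.bi) j)| ≤
        1/4 * |(S.Ui.mulVec (ha - hb) + S.Wi.mulVec (ua - ub)) j| := by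
      have := sigmoid_lip ((S.Wi.mulVec ua + S.Ui.mulVec ha + S.bi) j)
        ((S.Wi.mulVec ub + S.Ui.mulVec hb + S.bi) j)
      rwa [hdi j] at this
    have ht : |Real.tanh ((S.Wc.mulVec ub + S.Uc.mulVec hb + S.bc) j)| ≤ sCb S umax :=
      gate_tanh_le umax S.Wc S.Uc S.bc hum hub hhb j
    calc |sigmoid ((S.Wi.mulVec ua + S.Ui.mulVec ha + S.bi) j) -
          sigmoid ((S.Wi.mulVec ub + S.Ui.mulVec hb + S.bi) j)| *
          |Real.tanh ((S.Wc.mulVec ub + S.Uc.mulVec hb + S.bc) j)|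
        ≤ (1/4 * |(S.Ui.mulVec (ha - hb) + S.Wi.mulVec (ua - ub)) j|) * sCb S umax :=
          mul_le_mul hl ht (abs_nonneg _) (by positivity)
      _ = (1/4 * sCb S umax) * |(S.Ui.mulVec (ha - hb) + S.Wi.mulVec (ua - ub)) j| := by ring
  have hzf : enorm (S.Uf.mulVec (ha - hb) + S.Wf.mulVec (ua - ub)) ≤
      spec S.Uf * enorm (ha - hb) + spec S.Wf * enorm (ua - ub) :=
    (enorm_add_le _ _).trans (add_le_add (enorm_mulVec_le _ _) (enorm_mulVec_le _ _))
  have hzi : enorm (S.Ui.mulVec (ha - hb) + S.Wi.mulVec (ua - ub)) ≤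
      spec S.Ui * enorm (ha - hb) + spec S.Wi * enorm (ua - ub) :=
    (enorm_add_le _ _).trans (add_le_add (enorm_mulVec_le _ _) (enorm_mulVec_le _ _))
  have hzc : enorm (S.Uc.mulVec (ha - hb) + S.Wc.mulVec (ua - ub)) ≤
      spec S.Uc * enorm (ha - hb) + spec S.Wc * enorm (ua - ub) :=
    (enorm_add_le _ _).trans (add_le_add (enorm_mulVec_le _ _) (enorm_mulVec_le _ _))
  have e2 : (1/4 * (sIb S umax * sCb S umax / (1 - sFb S umax))) *
      enorm (S.Uf.mulVec (ha - hb) + S.Wf.mulVec (ua - ub)) ≤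
      (1/4 * (sIb S umax * sCb S umax / (1 - sFb S umax))) *
        (spec S.Uf * enorm (ha - hb) + spec S.Wf * enorm (ua - ub)) :=
    mul_le_mul_of_nonneg_left hzf (by positivity)
  have e3 : sIb S umax * enorm (S.Uc.mulVec (ha - hb) + S.Wc.mulVec (ua - ub)) ≤
      sIb S umax * (spec S.Uc * enorm (ha - hb) + spec S.Wc * enorm (ua - ub)) :=
    mul_le_mul_of_nonneg_left hzc (sIb_nonneg S umax)
  have e4 : (1/4 * sCb S umax) * enorm (S.Ui.mulVec (ha - hb) + S.Wi.mulVec (ua - ub)) ≤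
      (1/4 * sCb S umax) * (spec S.Ui * enorm (ha - hb) + spec S.Wi * enorm (ua - ub)) :=
    mul_le_mul_of_nonneg_left hzi (by have := sCb_nonneg S umax; positivity)
  have htri : enorm (stepC S ua ca ha - stepC S ub cb hb) ≤
      enorm (fun j => sigmoid ((S.Wf.mulVec ua + S.Uf.mulVec ha + S.bf) j) * (ca j - cb j)) +
      (enorm (fun j => (sigmoid ((S.Wf.mulVec ua + S.Uf.mulVec ha + S.bf) j) -
          sigmoid ((S.Wf.mulVec ub + S.Uf.mulVec hb + S.bf) j)) * cb j) +
      (enorm (fun j => sigmoid ((S.Wi.mulVec ua + S.Ui.mulVec ha + S.bi) j) *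
          (Real.tanh ((S.Wc.mulVec ua + S.Uc.mulVec ha + S.bc) j) -
           Real.tanh ((S.Wc.mulVec ub + S.Uc.mulVec hb + S.bc) j))) +
       enorm (fun j => (sigmoid ((S.Wi.mulVec ua + S.Ui.mulVec ha + S.bi) j) -
          sigmoid ((S.Wi.mulVec ub + S.Ui.mulVec hb + S.bi) j)) *
          Real.tanh ((S.Wc.mulVec ub + S.Uc.mulVec hb + S.bc) j)))) := by
    rw [hsplit]
    refine (enorm_add_le _ _).trans (add_le_add (le_refl _) ?_)
    refine (enorm_add_le _ _).trans (add_le_add (le_refl _) ?_)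
    exact enorm_add_le _ _
  have expand : sFb S umax * enorm (ca - cb) + alphaD S umax * enorm (ha - hb) +
      betaD S umax * enorm (ua - ub) =
      sFb S umax * enorm (ca - cb) +
      ((1/4 * (sIb S umax * sCb S umax / (1 - sFb S umax))) *
        (spec S.Uf * enorm (ha - hb) + spec S.Wf * enorm (ua - ub)) +
      (sIb S umax * (spec S.Uc * enorm (ha - hb) + spec S.Wc * enorm (ua - ub)) +
       (1/4 * sCb S umax) * (spec S.Ui * enorm (ha - hb) + spec S.Wi * enorm (ua - ub)))) := by
    unfold alphaD betaD
    ring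
  rw [expand]
  linarith

lemma stepH_diff_bound (S : LSTM n m p) {umax : ℝ} (hum : 0 ≤ umax)
    {ua ub : Fin m → ℝ} {ca cb ha hb : Fin n → ℝ}
    (hua : vinf ua ≤ umax) (hub : vinf ub ≤ umax)
    (hcb : vinf cb ≤ sIb S umax * sCb S umax / (1 - sFb S umax))
    (hha : vinf ha ≤ 1) (hhb : vinf hb ≤ 1) :
    enorm (stepH S ua ca ha - stepH S ub cb hb) ≤
      sOb S umax * sFb S umax * enorm (ca - cb) +
      (alphaD S umax * sOb S umax + 1/4 * sXb S umax * spec S.Uo) * enorm (ha - hb) +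
      (betaD S umax * sOb S umax + 1/4 * sXb S umax * spec S.Wo) * enorm (ua - ub) := by
  have hdo : ∀ j, (S.Wo.mulVec ua + S.Uo.mulVec ha + S.bo) j -
      (S.Wo.mulVec ub + S.Uo.mulVec hb + S.bo) j =
      (S.Uo.mulVec (ha - hb) + S.Wo.mulVec (ua - ub)) j := by
    intro j; simp [Matrix.mulVec_sub]; ring
  have hsplit : stepH S ua ca ha - stepH S ub cb hb =
      (fun j => sigmoid ((S.Wo.mulVec ua + S.Uo.mulVec ha + S.bo) j) *
        (Real.tanh (stepC S ua ca ha j) - Real.tanh (stepC S ub cb hb j))) +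
      (fun j => (sigmoid ((S.Wo.mulVec ua + S.Uo.mulVec ha + S.bo) j) -
        sigmoid ((S.Wo.mulVec ub + S.Uo.mulVec hb + S.bo) j)) *
        Real.tanh (stepC S ub cb hb j)) := by
    funext j
    simp only [Pi.sub_apply, Pi.add_apply, stepH]
    ring
  have hw1 : enorm (fun j => sigmoid ((S.Wo.mulVec ua + S.Uo.mulVec ha + S.bo) j) *
      (Real.tanh (stepC S ua ca ha j) - Real.tanh (stepC S ub cb hb j))) ≤
      sOb S umax * enorm (stepC S ua ca ha - stepC S ub cb hb) := by
    apply enorm_le_mul (sOb_nonneg S umax)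
    intro j
    rw [abs_mul, Pi.sub_apply]
    have h1 : |sigmoid ((S.Wo.mulVec ua + S.Uo.mulVec ha + S.bo) j)| ≤ sOb S umax := by
      rw [abs_of_pos (sigmoid_pos _)]
      exact gate_sig_le umax S.Wo S.Uo S.bo hum hua hha j
    have h2 : |Real.tanh (stepC S ua ca ha j) - Real.tanh (stepC S ub cb hb j)| ≤
        |stepC S ua ca ha j - stepC S ub cb hb j| := tanh_lip _ _
    exact mul_le_mul h1 h2 (abs_nonneg _) (sOb_nonneg S umax)
  have hw2 : enorm (fun j => (sigmoid ((S.Wo.mulVec ua + S.Uo.mulVec ha + S.bo) j) -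
      sigmoid ((S.Wo.mulVec ub + S.Uo.mulVec hb + S.bo) j)) *
      Real.tanh (stepC S ub cb hb j)) ≤
      (1/4 * sXb S umax) * enorm (S.Uo.mulVec (ha - hb) + S.Wo.mulVec (ua - ub)) := by
    apply enorm_le_mul (by have := sXb_nonneg S umax; positivity)
    intro j
    rw [abs_mul]
    have hl : |sigmoid ((S.Wo.mulVec ua + S.Uo.mulVec ha + S.bo) j) -
        sigmoid ((S.Wo.mulVec ub + S.Uo.mulVec hb + S.bo) j)| ≤
        1/4 * |(S.Uo.mulVec (ha - hb) + S.Wo.mulVec (ua - ub)) j| := by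
      have := sigmoid_lip ((S.Wo.mulVec ua + S.Uo.mulVec ha + S.bo) j)
        ((S.Wo.mulVec ub + S.Uo.mulVec hb + S.bo) j)
      rwa [hdo j] at this
    have ht : |Real.tanh (stepC S ub cb hb j)| ≤ sXb S umax := by
      unfold sXb
      exact abs_tanh_le (stepC_abs_le S hum hub hcb hhb j)
    calc |sigmoid ((S.Wo.mulVec ua + S.Uo.mulVec ha + S.bo) j) -
          sigmoid ((S.Wo.mulVec ub + S.Uo.mulVec hb + S.bo) j)| *
          |Real.tanh (stepC S ub cb hb j)|
        ≤ (1/4 * |(S.Uo.mulVec (ha - hb) + S.Wo.mulVec (ua - ub)) j|) * sXb S umax :=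
          mul_le_mul hl ht (abs_nonneg _) (by positivity)
      _ = (1/4 * sXb S umax) * |(S.Uo.mulVec (ha - hb) + S.Wo.mulVec (ua - ub)) j| := by ring
  have hzo : enorm (S.Uo.mulVec (ha - hb) + S.Wo.mulVec (ua - ub)) ≤
      spec S.Uo * enorm (ha - hb) + spec S.Wo * enorm (ua - ub) :=
    (enorm_add_le _ _).trans (add_le_add (enorm_mulVec_le _ _) (enorm_mulVec_le _ _))
  have hC := stepC_diff_bound (ca := ca) S hum hua hub hcb hha hhb
  have htri : enorm (stepH S ua ca ha - stepH S ub cb hb) ≤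
      enorm (fun j => sigmoid ((S.Wo.mulVec ua + S.Uo.mulVec ha + S.bo) j) *
        (Real.tanh (stepC S ua ca ha j) - Real.tanh (stepC S ub cb hb j))) +
      enorm (fun j => (sigmoid ((S.Wo.mulVec ua + S.Uo.mulVec ha + S.bo) j) -
        sigmoid ((S.Wo.mulVec ub + S.Uo.mulVec hb + S.bo) j)) *
        Real.tanh (stepC S ub cb hb j)) := by
    rw [hsplit]; exact enorm_add_le _ _
  have hmul1 : sOb S umax * enorm (stepC S ua ca ha - stepC S ub cb hb) ≤
      sOb S umax * (sFb S umax * enorm (ca - cb) + alphaD S umax * enorm (ha - hb) +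
        betaD S umax * enorm (ua - ub)) :=
    mul_le_mul_of_nonneg_left hC (sOb_nonneg S umax)
  have hmul2 : (1/4 * sXb S umax) *
      enorm (S.Uo.mulVec (ha - hb) + S.Wo.mulVec (ua - ub)) ≤
      (1/4 * sXb S umax) * (spec S.Uo * enorm (ha - hb) + spec S.Wo * enorm (ua - ub)) :=
    mul_le_mul_of_nonneg_left hzo (by have := sXb_nonneg S umax; positivity)
  nlinarith [htri, hw1, hw2, hmul1, hmul2]

end Main


/-- one-step incremental bound for the LSTM (Theorem 1, eq. (13)). -/
theorem statement0 {n m p : ℕ} (S : LSTM n m p) (umax : ℝ) (hu : 0 < umax)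
    (ua ub : Fin m → ℝ) (hua : ua ∈ setU m umax) (hub : ub ∈ setU m umax)
    (xa xb : State n) (hxa : xa ∈ setX S umax) (hxb : xb ∈ setX S umax) :
    ∀ i : Fin 2,
      ![enorm ((step S xa ua).1 - (step S xb ub).1),
        enorm ((step S xa ua).2 - (step S xb ub).2)] i ≤
      (Adelta S umax).mulVec ![enorm (xa.1 - xb.1), enorm (xa.2 - xb.2)] i +
        Bdelta S umax i * enorm (ua - ub) := by
  have hua' : vinf ua ≤ umax := hua
  have hub' : vinf ub ≤ umax := hub
  have hcb : vinf xb.1 ≤ sIb S umax * sCb S umax / (1 - sFb S umax) := hxb.1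
  have hha : vinf xa.2 ≤ 1 := hxa.2
  have hhb : vinf xb.2 ≤ 1 := hxb.2
  have key0 := stepC_diff_bound (ca := xa.1) S hu.le hua' hub' hcb hha hhb
  have key1 := stepH_diff_bound (ca := xa.1) S hu.le hua' hub' hcb hha hhb
  intro i
  fin_cases i
  · simpa [step, Adelta, Bdelta, Matrix.mulVec, dotProduct, Fin.sum_univ_two]
      using key0
  · simpa [step, Adelta, Bdelta, Matrix.mulVec, dotProduct, Fin.sum_univ_two]
      using key1

end LSTMmpc
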